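/- Let Z be a compact Hausdorff space and h_1, …, h_k : Z → Z pairwise commuting surjective local homeomorphisms, with β_{c_i} := limsup_{j→∞} j^{-1} ln( max_{z∈Z} |h_i^{-j}(z)| ). Let r ∈ (0,∞)^k and fix β_0 ∈ (0,∞) with β_0 r_i > β_{c_i} for all i. Then for every z ∈ Z, f_β(z) := Σ_{n∈ℕ^k} e^{-β r·n} |h^{-n}(z)| → 1 as β → ∞; moreover for every Borel probability measure ε on Z, ∫_Z f_β dε → 1 as β → ∞. -/

import Mathlib

open Filter MeasureTheory

/-- `h^m = h 0 ^[m 0] ∘ ⋯ ∘ h (k-1) ^[m (k-1)]`. -/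
def compIter {Z : Type*} {k : ℕ} (h : Fin k → Z → Z) (m : Fin k → ℕ) : Z → Z :=
  (List.ofFn fun i => (h i)^[m i]).foldr (· ∘ ·) id

/-- The critical inverse temperature
`β_c = limsup_{j→∞} j⁻¹ ln (max_z |f^{-j}(z)|)` of a map `f : Z → Z`. -/
noncomputable def betaC {Z : Type*} (f : Z → Z) : ℝ :=
  Filter.limsup
    (fun j : ℕ => Real.log (⨆ z : Z, (Nat.card ((f^[j]) ⁻¹' {z}) : ℝ)) / j)
    Filter.atTop

section AuxLemmas
open Set


set_option linter.unusedSectionVars false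
section Aux

variable {Z : Type*} [TopologicalSpace Z] [CompactSpace Z] [T2Space Z]

/-- A local homeomorphism on a compact space has uniformly finite fibres. -/
lemma exists_uniform_bound {f : Z → Z} (hf : IsLocalHomeomorph f) :
    ∃ N : ℕ, ∀ z : Z, (f ⁻¹' {z}).Finite ∧ Nat.card (f ⁻¹' {z}) ≤ N := by
  classical
  choose e he hfe using hf
  obtain ⟨t, ht⟩ := isCompact_univ.elim_finite_subcover (fun x : Z => (e x).source)
      (fun x => (e x).open_source) (fun x _ => Set.mem_iUnion.mpr ⟨x, he x⟩)
  refine ⟨t.card, fun z => ?_⟩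
  have key : ∀ y : f ⁻¹' {z}, ∃ x ∈ t, (y : Z) ∈ (e x).source := by
    intro y
    simpa using ht (Set.mem_univ (y : Z))
  choose g hg hgs using key
  have hinj : Function.Injective fun y : f ⁻¹' {z} => (⟨g y, hg y⟩ : t) := by
    intro y y' hyy'
    have hx : g y = g y' := congrArg Subtype.val hyy'
    have h1 : (e (g y)) (y : Z) = (e (g y)) (y' : Z) := by
      have hz1 : f (y : Z) = z := y.2
      have hz2 : f (y' : Z) = z := y'.2
      rw [← hfe (g y), hz1, hz2]
    have := (e (g y)).injOn (hgs y) (hx ▸ hgs y') h1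
    exact Subtype.ext this
  have hfin : (f ⁻¹' {z}).Finite := by
    have : Finite (f ⁻¹' {z}) := Finite.of_injective _ hinj
    exact Set.toFinite _
  refine ⟨hfin, ?_⟩
  calc Nat.card (f ⁻¹' {z}) ≤ Nat.card t := Nat.card_le_card_of_injective _ hinj
    _ = t.card := Nat.card_eq_finsetCard t

lemma fiber_finite {f : Z → Z} (hf : IsLocalHomeomorph f) (z : Z) : (f ⁻¹' {z}).Finite :=
  ((exists_uniform_bound hf).choose_spec z).1

lemma isLocalHomeomorph_id : IsLocalHomeomorph (id : Z → Z) := by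
  have := (Homeomorph.refl Z).isLocalHomeomorph
  simpa using this

lemma iter_lh {f : Z → Z} (hf : IsLocalHomeomorph f) : ∀ n, IsLocalHomeomorph (f^[n])
  | 0 => by simpa using isLocalHomeomorph_id (Z := Z)
  | (n+1) => by
      rw [Function.iterate_succ']
      exact hf.comp (iter_lh hf n)

/-- Fibre cardinality of a composition. -/
lemma card_comp_le {F G : Z → Z} (hF : IsLocalHomeomorph F) (hG : IsLocalHomeomorph G)
    {a b : ℝ} (hb0 : 0 ≤ b)
    (ha : ∀ z, (Nat.card (F ⁻¹' {z}) : ℝ) ≤ a)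
    (hb : ∀ z, (Nat.card (G ⁻¹' {z}) : ℝ) ≤ b) (z : Z) :
    (Nat.card ((F ∘ G) ⁻¹' {z}) : ℝ) ≤ a * b := by
  classical
  have hS : (F ⁻¹' {z}).Finite := fiber_finite hF z
  set s : Finset Z := hS.toFinset with hs
  set u : Finset Z := s.biUnion (fun y => (fiber_finite hG y).toFinset) with hu
  have hset : (F ∘ G) ⁻¹' {z} = ↑u := by
    ext x
    simp [hu, hs, Finset.mem_biUnion, Set.Finite.mem_toFinset, Set.mem_preimage]
  have hcard : (Nat.card ((F ∘ G) ⁻¹' {z}) : ℝ) = (u.card : ℝ) := by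
    rw [hset, Nat.card_coe_set_eq, Set.ncard_coe_finset]
  rw [hcard]
  have h1 : u.card ≤ ∑ y ∈ s, ((fiber_finite hG y).toFinset).card := Finset.card_biUnion_le
  have h2 : (u.card : ℝ) ≤ ∑ y ∈ s, ((((fiber_finite hG y).toFinset).card : ℕ) : ℝ) := by
    exact_mod_cast h1
  refine h2.trans ?_
  have h3 : ∀ y ∈ s, ((((fiber_finite hG y).toFinset).card : ℕ) : ℝ) ≤ b := by
    intro y _
    have : ((fiber_finite hG y).toFinset).card = Nat.card (G ⁻¹' {y}) := by
      rw [Nat.card_coe_set_eq, Set.ncard_eq_toFinset_card _ (fiber_finite hG y)]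
    rw [this]; exact hb y
  calc ∑ y ∈ s, ((((fiber_finite hG y).toFinset).card : ℕ) : ℝ)
      ≤ ∑ _y ∈ s, b := Finset.sum_le_sum h3
    _ = (s.card : ℝ) * b := by rw [Finset.sum_const, nsmul_eq_mul]
    _ ≤ a * b := by
        refine mul_le_mul_of_nonneg_right ?_ hb0
        have : (s.card : ℝ) = (Nat.card (F ⁻¹' {z}) : ℝ) := by
          rw [Nat.card_coe_set_eq, Set.ncard_eq_toFinset_card _ hS]
        rw [this]; exact ha z

lemma card_iter_le {f : Z → Z} (hf : IsLocalHomeomorph f) {N : ℕ}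
    (hN : ∀ z, (Nat.card (f ⁻¹' {z}) : ℝ) ≤ N) :
    ∀ (n : ℕ) (z : Z), (Nat.card ((f^[n]) ⁻¹' {z}) : ℝ) ≤ (N : ℝ) ^ n := by
  intro n
  induction n with
  | zero =>
      intro z
      simp [Set.preimage_id', Nat.card_coe_set_eq, Set.ncard_singleton]
  | succ n ih =>
      intro z
      have h := card_comp_le (iter_lh hf n) hf (by positivity) ih hN z
      rw [← Function.iterate_succ] at h
      calc (Nat.card ((f^[n+1]) ⁻¹' {z}) : ℝ) ≤ (N:ℝ)^n * N := h
        _ = (N:ℝ)^(n+1) := by ring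

end Aux

section Aux2

variable {Z : Type*} [TopologicalSpace Z] [CompactSpace Z] [T2Space Z]

/-- Exponential bound on fibre cardinalities of iterates from the critical temperature. -/
lemma exp_bound [Nonempty Z] {f : Z → Z} (hf : IsLocalHomeomorph f)
    (hsurj : Function.Surjective f) {b : ℝ} (hb0 : 0 ≤ b) (hb : betaC f < b) :
    ∃ C : ℝ, 1 ≤ C ∧ ∀ (j : ℕ) (z : Z),
      (Nat.card ((f^[j]) ⁻¹' {z}) : ℝ) ≤ C * Real.exp (b * j) := by
  classical
  obtain ⟨N, hN⟩ := exists_uniform_bound hf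
  have hNr : ∀ z, (Nat.card (f ⁻¹' {z}) : ℝ) ≤ (N : ℝ) := fun z => by
    exact_mod_cast (hN z).2
  set S : ℕ → ℝ := fun j => ⨆ z : Z, (Nat.card ((f^[j]) ⁻¹' {z}) : ℝ) with hS
  have hbdd : ∀ j, BddAbove (Set.range fun z : Z => (Nat.card ((f^[j]) ⁻¹' {z}) : ℝ)) := by
    intro j
    refine ⟨(N : ℝ) ^ j, ?_⟩
    rintro x ⟨z, rfl⟩
    exact card_iter_le hf hNr j z
  have hcard_le_S : ∀ (j : ℕ) (z : Z), (Nat.card ((f^[j]) ⁻¹' {z}) : ℝ) ≤ S j := fun j z =>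
    le_ciSup (hbdd j) z
  have hS_le : ∀ j, S j ≤ (N : ℝ) ^ j := fun j => ciSup_le (card_iter_le hf hNr j)
  have hone_le_card : ∀ (j : ℕ) (z : Z), (1 : ℝ) ≤ (Nat.card ((f^[j]) ⁻¹' {z}) : ℝ) := by
    intro j z
    have hne : ((f^[j]) ⁻¹' {z}).Nonempty := by
      obtain ⟨x, hx⟩ := (hsurj.iterate j) z
      exact ⟨x, by simp [hx]⟩
    haveI := hne.to_subtype
    haveI := (fiber_finite (iter_lh hf j) z).to_subtype
    exact_mod_cast Nat.one_le_iff_ne_zero.mpr Nat.card_pos.ne'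
  have hS_ge1 : ∀ j, (1 : ℝ) ≤ S j := fun j =>
    le_trans (hone_le_card j (Classical.arbitrary Z)) (hcard_le_S j _)
  have hSpos : ∀ j, (0 : ℝ) < S j := fun j => lt_of_lt_of_le one_pos (hS_ge1 j)
  have hN1 : (1 : ℝ) ≤ (N : ℝ) := by
    have h := hone_le_card 1 (Classical.arbitrary Z)
    rw [Function.iterate_one] at h
    exact h.trans (hNr _)
  have hbddU : IsBoundedUnder (· ≤ ·) atTop (fun j : ℕ => Real.log (S j) / j) := by
    refine isBoundedUnder_of ⟨Real.log N, fun j => ?_⟩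
    rcases Nat.eq_zero_or_pos j with rfl | hj
    · simp [Real.log_nonneg hN1]
    · rw [div_le_iff₀ (by exact_mod_cast hj)]
      calc Real.log (S j) ≤ Real.log ((N:ℝ)^j) := Real.log_le_log (hSpos j) (hS_le j)
        _ = j * Real.log N := by rw [Real.log_pow]
        _ = Real.log N * j := by ring
  have hev : ∀ᶠ j : ℕ in atTop, Real.log (S j) / j < b :=
    eventually_lt_of_limsup_lt hb hbddU
  obtain ⟨J, hJ⟩ := eventually_atTop.mp hev
  refine ⟨(∑ j ∈ Finset.range (J+1), S j) + 1, ?_, ?_⟩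
  · have h0 : (0:ℝ) ≤ ∑ j ∈ Finset.range (J+1), S j :=
      Finset.sum_nonneg fun j _ => (hSpos j).le
    linarith
  · intro j z
    set C : ℝ := (∑ j ∈ Finset.range (J+1), S j) + 1 with hC
    have hC1 : 1 ≤ C := by
      have h0 : (0:ℝ) ≤ ∑ j ∈ Finset.range (J+1), S j :=
        Finset.sum_nonneg fun j _ => (hSpos j).le
      rw [hC]; linarith
    rcases le_or_gt j J with hjJ | hjJ
    · have h1 : S j ≤ ∑ i ∈ Finset.range (J+1), S i :=
        Finset.single_le_sum (fun i _ => (hSpos i).le) (Finset.mem_range.mpr (by omega))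
      have h2 : (Nat.card ((f^[j]) ⁻¹' {z}) : ℝ) ≤ C := by
        refine le_trans (hcard_le_S j z) (le_trans h1 (by rw [hC]; linarith))
      refine h2.trans ?_
      exact le_mul_of_one_le_right (by linarith) (Real.one_le_exp (by positivity))
    · have hj1 : (0:ℝ) < j := by exact_mod_cast Nat.lt_of_lt_of_le (Nat.zero_lt_succ _) hjJ
      have h1 : Real.log (S j) / j < b := hJ j (by omega)
      have h2 : Real.log (S j) < b * j := by
        rwa [div_lt_iff₀ hj1] at h1
      have h3 : S j ≤ Real.exp (b * j) := by
        rw [← Real.exp_log (hSpos j)]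
        exact (Real.exp_le_exp.mpr h2.le)
      refine le_trans (hcard_le_S j z) (h3.trans ?_)
      exact le_mul_of_one_le_left (Real.exp_pos _).le hC1

end Aux2

section Aux3

lemma compIter_nil {Z : Type*} (h : Fin 0 → Z → Z) (n : Fin 0 → ℕ) : compIter h n = id := by
  simp [compIter]

lemma compIter_succ {Z : Type*} {k : ℕ} (h : Fin (k+1) → Z → Z) (n : Fin (k+1) → ℕ) :
    compIter h n = (h 0)^[n 0] ∘ compIter (fun i => h i.succ) (fun i => n i.succ) := by
  rw [compIter, List.ofFn_succ]
  rfl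

lemma compIter_zero {Z : Type*} {k : ℕ} (h : Fin k → Z → Z) :
    compIter h (fun _ => 0) = id := by
  induction k with
  | zero => exact compIter_nil _ _
  | succ k ih => rw [compIter_succ, ih]; rfl

variable {Z : Type*} [TopologicalSpace Z] [CompactSpace Z] [T2Space Z]

lemma compIter_lh {k : ℕ} {h : Fin k → Z → Z} (hlh : ∀ i, IsLocalHomeomorph (h i))
    (n : Fin k → ℕ) : IsLocalHomeomorph (compIter h n) := by
  induction k with
  | zero => rw [compIter_nil]; exact isLocalHomeomorph_id
  | succ k ih =>
      rw [compIter_succ]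
      exact (iter_lh (hlh 0) (n 0)).comp (ih (fun i => hlh i.succ) _)

lemma compIter_card_le [Nonempty Z] {k : ℕ} :
    ∀ (h : Fin k → Z → Z), (∀ i, IsLocalHomeomorph (h i)) → ∀ (n : Fin k → ℕ) (a : Fin k → ℝ),
    (∀ i z, (Nat.card (((h i)^[n i]) ⁻¹' {z}) : ℝ) ≤ a i) → ∀ z : Z,
    (Nat.card ((compIter h n) ⁻¹' {z}) : ℝ) ≤ ∏ i, a i := by
  induction k with
  | zero =>
      intro h hlh n a ha z
      rw [compIter_nil]
      simp [Set.preimage_id', Nat.card_coe_set_eq, Set.ncard_singleton]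
  | succ k ih =>
      intro h hlh n a ha z
      have ha0 : ∀ i, (0:ℝ) ≤ a i := fun i =>
        le_trans (by positivity) (ha i (Classical.arbitrary Z))
      rw [compIter_succ, Fin.prod_univ_succ]
      exact card_comp_le (iter_lh (hlh 0) (n 0))
        (compIter_lh (fun i => hlh i.succ) _)
        (Finset.prod_nonneg fun i _ => ha0 i.succ)
        (ha 0)
        (ih (fun i => h i.succ) (fun i => hlh i.succ) (fun i => n i.succ)
          (fun i => a i.succ) (fun i z => ha i.succ z)) z

end Aux3

section Aux4

lemma summable_pi_pow : ∀ {k : ℕ} (c : Fin k → ℝ), (∀ i, 0 ≤ c i) → (∀ i, c i < 1) →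
    Summable (fun n : Fin k → ℕ => ∏ i, c i ^ n i) := by
  intro k
  induction k with
  | zero => intro c _ _; exact Summable.of_finite
  | succ k ih =>
      intro c h0 h1
      refine (Equiv.summable_iff (Fin.consEquiv (fun _ : Fin (k+1) => ℕ))).mp ?_
      refine Summable.congr
        ((summable_geometric_of_lt_one (h0 0) (h1 0)).mul_of_nonneg
          (ih (fun i => c i.succ) (fun i => h0 i.succ) (fun i => h1 i.succ))
          (fun m => pow_nonneg (h0 0) m)
          (fun p => Finset.prod_nonneg fun i _ => pow_nonneg (h0 i.succ) _)) ?_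
      rintro ⟨m, p⟩
      show c 0 ^ m * ∏ i : Fin k, (c i.succ) ^ p i = ∏ i, c i ^ (Fin.cons m p i)
      rw [Fin.prod_univ_succ]
      simp

lemma summable_exp_sum {k : ℕ} {γ : ℝ} (hγ : 0 < γ) {r : Fin k → ℝ} (hr : ∀ i, 0 < r i) :
    Summable (fun n : Fin k → ℕ => Real.exp (-(γ * ∑ i, r i * n i))) := by
  have heq : (fun n : Fin k → ℕ => Real.exp (-(γ * ∑ i, r i * n i)))
      = fun n : Fin k → ℕ => ∏ i, (Real.exp (-(γ * r i))) ^ n i := by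
    funext n
    have h1 : -(γ * ∑ i, r i * (n i : ℝ)) = ∑ i, ((n i : ℝ) * (-(γ * r i))) := by
      rw [Finset.mul_sum, ← Finset.sum_neg_distrib]
      exact Finset.sum_congr rfl fun i _ => by ring
    rw [h1, Real.exp_sum]
    exact Finset.prod_congr rfl fun i _ => by rw [Real.exp_nat_mul]
  rw [heq]
  exact summable_pi_pow _ (fun i => Real.exp_nonneg _)
    (fun i => Real.exp_lt_one_iff.mpr (by nlinarith [hr i, hγ]))

end Aux4
section Aux5

variable {Z : Type*} [TopologicalSpace Z] [CompactSpace Z] [T2Space Z]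

/-- The fibre cardinality of a local homeomorphism is lower semicontinuous. -/
lemma card_le_nhds {F : Z → Z} (hF : IsLocalHomeomorph F) (z₀ : Z) :
    ∀ᶠ z in nhds z₀, Nat.card (F ⁻¹' {z₀}) ≤ Nat.card (F ⁻¹' {z}) := by
  classical
  choose e he hfe using hF
  have hFlh : IsLocalHomeomorph F := fun x => ⟨e x, he x, hfe x⟩
  have hS : (F ⁻¹' {z₀}).Finite := fiber_finite hFlh z₀
  set s : Finset Z := hS.toFinset with hs
  have hsep' : ∀ x y : Z, ∃ U V : Set Z,
      IsOpen U ∧ IsOpen V ∧ (x ≠ y → x ∈ U ∧ y ∈ V ∧ Disjoint U V) := by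
    intro x y
    by_cases hxy : x ≠ y
    · obtain ⟨U, V, hU, hV, hx, hy, hd⟩ := t2_separation hxy
      exact ⟨U, V, hU, hV, fun _ => ⟨hx, hy, hd⟩⟩
    · exact ⟨Set.univ, Set.univ, isOpen_univ, isOpen_univ, fun hc => absurd hc hxy⟩
  choose U V hUo hVo hsp using hsep'
  set W : Z → Set Z := fun x => (e x).source ∩ ⋂ y ∈ s.erase x, (U x y ∩ V y x) with hW
  have hWo : ∀ x, IsOpen (W x) := by
    intro x
    refine (e x).open_source.inter ?_
    refine Set.Finite.isOpen_biInter (s.erase x).finite_toSet ?_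
    exact fun y _ => (hUo x y).inter (hVo y x)
  have hxW : ∀ x, x ∈ W x := by
    intro x
    refine ⟨he x, Set.mem_biInter fun y hy => ?_⟩
    have hyx : y ≠ x := (Finset.mem_erase.mp hy).1
    exact ⟨(hsp x y hyx.symm).1, (hsp y x hyx).2.1⟩
  have hWsrc : ∀ x, W x ⊆ (e x).source := fun x => Set.inter_subset_left
  have hWd : ∀ x ∈ s, ∀ x' ∈ s, x ≠ x' → Disjoint (W x) (W x') := by
    intro x _hx x' hx' hxx'
    have h1 : W x ⊆ U x x' := by
      intro w hw
      have := Set.mem_iInter₂.mp hw.2 x' (Finset.mem_erase.mpr ⟨hxx'.symm, hx'⟩)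
      exact this.1
    have h2 : W x' ⊆ V x x' := by
      intro w hw
      have := Set.mem_iInter₂.mp hw.2 x (Finset.mem_erase.mpr ⟨hxx', _hx⟩)
      exact this.2
    exact ((hsp x x' hxx').2.2).mono h1 h2
  -- the neighbourhood
  set V₀ : Set Z := ⋂ x ∈ s, ((e x).target ∩ (e x).symm ⁻¹' (W x)) with hV₀
  have hV₀o : IsOpen V₀ :=
    Set.Finite.isOpen_biInter s.finite_toSet fun x _ =>
      (e x).isOpen_inter_preimage_symm (hWo x)
  have hex : ∀ x ∈ s, (e x) x = z₀ := by
    intro x hx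
    have hx' : F x = z₀ := by
      have := (Set.Finite.mem_toFinset hS).mp (hs ▸ hx)
      simpa using this
    rw [← hfe x]; exact hx'
  have hz₀V₀ : z₀ ∈ V₀ := by
    refine Set.mem_iInter₂.mpr fun x hx => ?_
    have h1 : z₀ ∈ (e x).target := by
      rw [← hex x hx]; exact (e x).map_source (he x)
    have h2 : (e x).symm z₀ = x := by
      rw [← hex x hx]; exact (e x).left_inv (he x)
    exact ⟨h1, by rw [Set.mem_preimage, h2]; exact hxW x⟩
  refine Filter.eventually_of_mem (hV₀o.mem_nhds hz₀V₀) ?_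
  intro z hz
  haveI : Finite (F ⁻¹' {z}) := (fiber_finite hFlh z).to_subtype
  have hmem : ∀ x : F ⁻¹' {z₀}, (x : Z) ∈ s := by
    intro x
    exact (Set.Finite.mem_toFinset hS).mpr x.2
  have hzx : ∀ x : F ⁻¹' {z₀}, z ∈ (e (x : Z)).target ∧ (e (x : Z)).symm z ∈ W (x : Z) := by
    intro x
    exact Set.mem_iInter₂.mp hz (x : Z) (hmem x)
  set φ : (F ⁻¹' {z₀}) → (F ⁻¹' {z}) := fun x =>
    ⟨(e (x : Z)).symm z, by
      have h1 := (hzx x).1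
      have h2 : F ((e (x : Z)).symm z) = z := by
        rw [congrFun (hfe (x : Z)) ((e (x : Z)).symm z)]
        exact (e (x : Z)).right_inv h1
      simpa using h2⟩ with hφ
  have hφinj : Function.Injective φ := by
    intro x x' hxx'
    have hval : (e (x : Z)).symm z = (e (x' : Z)).symm z := congrArg Subtype.val hxx'
    by_contra hne
    have hne' : (x : Z) ≠ (x' : Z) := fun hc => hne (Subtype.ext hc)
    have hd := hWd _ (hmem x) _ (hmem x') hne'
    exact Set.disjoint_left.mp hd (hzx x).2 (hval ▸ (hzx x').2)
  exact Nat.card_le_card_of_injective φ hφinj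

lemma measurable_cardF [MeasurableSpace Z] [BorelSpace Z] {F : Z → Z}
    (hF : IsLocalHomeomorph F) :
    Measurable (fun z => (Nat.card (F ⁻¹' {z}) : ℝ)) := by
  have hopen : ∀ m : ℕ, IsOpen {z : Z | m ≤ Nat.card (F ⁻¹' {z})} := by
    intro m
    rw [isOpen_iff_mem_nhds]
    intro z₀ hz₀
    filter_upwards [card_le_nhds hF z₀] with z hz using le_trans hz₀ hz
  have hmeas : Measurable (fun z : Z => Nat.card (F ⁻¹' {z})) := by
    apply measurable_to_countable'
    intro m
    have hset : (fun z : Z => Nat.card (F ⁻¹' {z})) ⁻¹' {m}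
        = {z : Z | m ≤ Nat.card (F ⁻¹' {z})} \ {z : Z | m + 1 ≤ Nat.card (F ⁻¹' {z})} := by
      ext z
      simp only [Set.mem_preimage, Set.mem_singleton_iff, Set.mem_diff, Set.mem_setOf_eq]
      omega
    rw [hset]
    exact ((hopen m).measurableSet).diff ((hopen (m+1)).measurableSet)
  exact Measurable.comp (measurable_from_nat (f := fun n : ℕ => (n : ℝ))) hmeas

end Aux5

end AuxLemmas

/-- `f_β(z) → 1` pointwise as `β → ∞`, and `∫ f_β dε → 1` for every
Borel probability measure `ε`. -/
theorem fbeta_tendsto_one {Z : Type*} [TopologicalSpace Z] [CompactSpace Z] [T2Space Z]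
    [MeasurableSpace Z] [BorelSpace Z] {k : ℕ} (h : Fin k → Z → Z)
    (hlh : ∀ i, IsLocalHomeomorph (h i))
    (hsurj : ∀ i, Function.Surjective (h i))
    (hcomm : ∀ i j : Fin k, (h i) ∘ (h j) = (h j) ∘ (h i))
    (r : Fin k → ℝ) (hr : ∀ i, 0 < r i)
    (β₀ : ℝ) (hβ₀ : 0 < β₀) (hβ₀c : ∀ i, betaC (h i) < β₀ * r i) :
    (∀ z : Z,
      Filter.Tendsto
        (fun β : ℝ =>
          ∑' n : Fin k → ℕ,
            Real.exp (-(β * ∑ i, r i * n i)) *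
              (Nat.card ((compIter h n) ⁻¹' {z}) : ℝ))
        Filter.atTop (nhds 1)) ∧
    ∀ ε : Measure Z, IsProbabilityMeasure ε →
      Filter.Tendsto
        (fun β : ℝ =>
          ∫ z, (∑' n : Fin k → ℕ,
            Real.exp (-(β * ∑ i, r i * n i)) *
              (Nat.card ((compIter h n) ⁻¹' {z}) : ℝ)) ∂ε)
        Filter.atTop (nhds 1) := by
  classical
  rcases isEmpty_or_nonempty Z with hZ | hZ
  · refine ⟨fun z => (IsEmpty.false z).elim, fun ε hε => ?_⟩
    exfalso
    have h1 : ε Set.univ = 1 := hε.measure_univ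
    rw [Set.univ_eq_empty_iff.mpr hZ, measure_empty] at h1
    exact zero_ne_one h1
  -- notation
  set s : (Fin k → ℕ) → ℝ := fun n => ∑ i, r i * (n i : ℝ) with hsdef
  have hs0 : s (fun _ => 0) = 0 := by simp [hsdef]
  have hsnn : ∀ n, 0 ≤ s n := fun n => Finset.sum_nonneg fun i _ => mul_nonneg (hr i).le (Nat.cast_nonneg _)
  have hspos : ∀ n, n ≠ (fun _ => 0) → 0 < s n := by
    intro n hn
    obtain ⟨i, hi⟩ := Function.ne_iff.mp hn
    refine Finset.sum_pos' (fun j _ => mul_nonneg (hr j).le (Nat.cast_nonneg _)) ⟨i, Finset.mem_univ i, ?_⟩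
    have : 1 ≤ n i := Nat.pos_of_ne_zero hi
    have h1 : (1:ℝ) ≤ (n i : ℝ) := by exact_mod_cast this
    nlinarith [hr i]
  -- the main uniform bound
  obtain ⟨C, hC1, hCb⟩ : ∃ C : ℝ, 1 ≤ C ∧ ∀ (n : Fin k → ℕ) (z : Z),
      (Nat.card ((compIter h n) ⁻¹' {z}) : ℝ) ≤ C * Real.exp (β₀ * s n) := by
    choose Ci hCi1 hCib using fun i =>
      exp_bound (hlh i) (hsurj i) (mul_pos hβ₀ (hr i)).le (hβ₀c i)
    have hprod1 : (1:ℝ) ≤ ∏ i, Ci i := by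
      have := Finset.prod_le_prod (s := Finset.univ) (f := fun _ : Fin k => (1:ℝ))
        (g := Ci) (fun i _ => zero_le_one) (fun i _ => hCi1 i)
      simpa using this
    refine ⟨∏ i, Ci i, hprod1, fun n z => ?_⟩
    have h1 := compIter_card_le h hlh n (fun i => Ci i * Real.exp ((β₀ * r i) * n i))
      (fun i z => hCib i (n i) z) z
    refine h1.trans (le_of_eq ?_)
    rw [Finset.prod_mul_distrib, ← Real.exp_sum]
    have harg : (∑ i, β₀ * r i * ((n i : ℕ) : ℝ)) = β₀ * s n := by
      simp only [hsdef, Finset.mul_sum]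
      exact Finset.sum_congr rfl fun i _ => by ring
    rw [harg]
  have hCpos : (0:ℝ) < C := lt_of_lt_of_le one_pos hC1
  -- dominating function
  have hG : Summable (fun n : Fin k → ℕ => C * Real.exp (-(s n))) := by
    refine Summable.mul_left C (Summable.congr (summable_exp_sum one_pos hr) ?_)
    intro n; rw [one_mul]
  -- termwise domination for β ≥ β₀ + 1
  have hterm_le : ∀ β : ℝ, β₀ + 1 ≤ β → ∀ n,
      C * Real.exp (β₀ * s n) * Real.exp (-(β * s n)) ≤ C * Real.exp (-(s n)) := by
    intro β hβ n
    have h1 : Real.exp (β₀ * s n) * Real.exp (-(β * s n)) = Real.exp ((β₀ - β) * s n) := by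
      rw [← Real.exp_add]; ring_nf
    rw [mul_assoc, h1]
    refine mul_le_mul_of_nonneg_left (Real.exp_le_exp.mpr ?_) hCpos.le
    nlinarith [hsnn n]
  have hg_le : ∀ β : ℝ, β₀ + 1 ≤ β → ∀ (n) (z : Z),
      Real.exp (-(β * s n)) * (Nat.card ((compIter h n) ⁻¹' {z}) : ℝ)
        ≤ C * Real.exp (-(s n)) := by
    intro β hβ n z
    refine le_trans ?_ (hterm_le β hβ n)
    calc Real.exp (-(β * s n)) * (Nat.card ((compIter h n) ⁻¹' {z}) : ℝ)
        ≤ Real.exp (-(β * s n)) * (C * Real.exp (β₀ * s n)) :=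
          mul_le_mul_of_nonneg_left (hCb n z) (Real.exp_nonneg _)
      _ = C * Real.exp (β₀ * s n) * Real.exp (-(β * s n)) := by ring
  have hsummand : ∀ β : ℝ, β₀ + 1 ≤ β → ∀ z : Z,
      Summable (fun n : Fin k → ℕ =>
        Real.exp (-(β * s n)) * (Nat.card ((compIter h n) ⁻¹' {z}) : ℝ)) := by
    intro β hβ z
    exact Summable.of_nonneg_of_le (fun n => by positivity) (fun n => hg_le β hβ n z) hG
  -- the tail bound
  set T : ℝ → ℝ := fun β => ∑' n : Fin k → ℕ,
    (if n = (fun _ => 0) then 0 else C * Real.exp (β₀ * s n) * Real.exp (-(β * s n))) with hTdef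
  have hTsummand : ∀ β : ℝ, β₀ + 1 ≤ β → Summable (fun n : Fin k → ℕ =>
      (if n = (fun _ => 0) then (0:ℝ) else C * Real.exp (β₀ * s n) * Real.exp (-(β * s n)))) := by
    intro β hβ
    refine Summable.of_nonneg_of_le (fun n => ?_) (fun n => ?_) hG
    · split
      · exact le_rfl
      · exact mul_nonneg (mul_nonneg hCpos.le (Real.exp_nonneg _)) (Real.exp_nonneg _)
    · split
      · exact mul_nonneg hCpos.le (Real.exp_nonneg _)
      · exact hterm_le β hβ n
  have hT0 : Tendsto T atTop (nhds 0) := by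
    have key := tendsto_tsum_of_dominated_convergence (𝓕 := atTop)
      (f := fun (β : ℝ) (n : Fin k → ℕ) =>
        (if n = (fun _ => 0) then (0:ℝ) else C * Real.exp (β₀ * s n) * Real.exp (-(β * s n))))
      (g := fun _ => (0:ℝ)) (bound := fun n => C * Real.exp (-(s n))) hG ?_ ?_
    · rw [tsum_zero] at key
      exact key
    · intro n
      by_cases hn : n = (fun _ => 0)
      · simp only [if_pos hn]
        exact tendsto_const_nhds
      · simp only [if_neg hn]
        have h2 : Tendsto (fun β : ℝ => β * s n) atTop atTop :=
          Tendsto.atTop_mul_const (hspos n hn) tendsto_id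
        have h3 : Tendsto (fun β : ℝ => Real.exp (-(β * s n))) atTop (nhds 0) :=
          Real.tendsto_exp_atBot.comp (tendsto_neg_atTop_atBot.comp h2)
        have h4 := h3.const_mul (C * Real.exp (β₀ * s n))
        simpa using h4
    · filter_upwards [eventually_ge_atTop (β₀ + 1)] with β hβ
      intro n
      rw [Real.norm_eq_abs, abs_of_nonneg (by
        split
        · exact le_rfl
        · exact mul_nonneg (mul_nonneg hCpos.le (Real.exp_nonneg _)) (Real.exp_nonneg _))]
      split
      · exact mul_nonneg hCpos.le (Real.exp_nonneg _)
      · exact hterm_le β hβ n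
  -- decomposition of f_β
  have hdecomp : ∀ β : ℝ, β₀ + 1 ≤ β → ∀ z : Z,
      (∑' n : Fin k → ℕ,
        Real.exp (-(β * s n)) * (Nat.card ((compIter h n) ⁻¹' {z}) : ℝ))
      = 1 + ∑' n : Fin k → ℕ, (if n = (fun _ => 0) then (0:ℝ)
          else Real.exp (-(β * s n)) * (Nat.card ((compIter h n) ⁻¹' {z}) : ℝ)) := by
    intro β hβ z
    rw [Summable.tsum_eq_add_tsum_ite (hsummand β hβ z) (fun _ => 0)]
    congr 1
    rw [hs0, compIter_zero]
    simp [Set.preimage_id', Nat.card_coe_set_eq, Set.ncard_singleton]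
  have hsq : ∀ β : ℝ, β₀ + 1 ≤ β → ∀ z : Z,
      ‖(∑' n : Fin k → ℕ,
        Real.exp (-(β * s n)) * (Nat.card ((compIter h n) ⁻¹' {z}) : ℝ)) - 1‖ ≤ T β := by
    intro β hβ z
    rw [hdecomp β hβ z, add_sub_cancel_left]
    have hRsum : Summable (fun n : Fin k → ℕ => (if n = (fun _ => 0) then (0:ℝ)
        else Real.exp (-(β * s n)) * (Nat.card ((compIter h n) ⁻¹' {z}) : ℝ))) := by
      refine Summable.of_nonneg_of_le (fun n => by split <;> positivity)
        (fun n => ?_) hG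
      split
      · exact mul_nonneg hCpos.le (Real.exp_nonneg _)
      · exact hg_le β hβ n z
    have hR0 : (0:ℝ) ≤ ∑' n : Fin k → ℕ, (if n = (fun _ => 0) then (0:ℝ)
        else Real.exp (-(β * s n)) * (Nat.card ((compIter h n) ⁻¹' {z}) : ℝ)) :=
      tsum_nonneg fun n => by split <;> positivity
    rw [Real.norm_eq_abs, abs_of_nonneg hR0, hTdef]
    refine Summable.tsum_le_tsum (fun n => ?_) hRsum (hTsummand β hβ)
    split
    · exact le_rfl
    · calc Real.exp (-(β * s n)) * (Nat.card ((compIter h n) ⁻¹' {z}) : ℝ)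
          ≤ Real.exp (-(β * s n)) * (C * Real.exp (β₀ * s n)) :=
            mul_le_mul_of_nonneg_left (hCb n z) (Real.exp_nonneg _)
        _ = C * Real.exp (β₀ * s n) * Real.exp (-(β * s n)) := by ring
  constructor
  · -- pointwise
    intro z
    have h0 : Tendsto (fun β : ℝ =>
        (∑' n : Fin k → ℕ,
          Real.exp (-(β * s n)) * (Nat.card ((compIter h n) ⁻¹' {z}) : ℝ)) - 1)
        atTop (nhds 0) := by
      refine squeeze_zero_norm' ?_ hT0
      filter_upwards [eventually_ge_atTop (β₀ + 1)] with β hβ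
      exact hsq β hβ z
    have h1 := h0.add_const 1
    simpa using h1
  · -- integral
    intro ε hε
    have hmeasn : ∀ n : Fin k → ℕ,
        Measurable (fun z : Z => (Nat.card ((compIter h n) ⁻¹' {z}) : ℝ)) :=
      fun n => measurable_cardF (compIter_lh hlh n)
    have hmeasf : ∀ β : ℝ, β₀ + 1 ≤ β → Measurable (fun z : Z =>
        ∑' n : Fin k → ℕ,
          Real.exp (-(β * s n)) * (Nat.card ((compIter h n) ⁻¹' {z}) : ℝ)) := by
      intro β hβ
      have heq : (fun z : Z => ∑' n : Fin k → ℕ,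
          Real.exp (-(β * s n)) * (Nat.card ((compIter h n) ⁻¹' {z}) : ℝ))
          = fun z : Z => (∑' n : Fin k → ℕ, ENNReal.ofReal
            (Real.exp (-(β * s n)) * (Nat.card ((compIter h n) ⁻¹' {z}) : ℝ))).toReal := by
        funext z
        rw [← ENNReal.ofReal_tsum_of_nonneg (fun n => by positivity) (hsummand β hβ z),
          ENNReal.toReal_ofReal (tsum_nonneg fun n => by positivity)]
      rw [heq]
      refine Measurable.ennreal_toReal (Measurable.ennreal_tsum fun n => ?_)
      exact ENNReal.measurable_ofReal.comp ((hmeasn n).const_mul _)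
    have hint : ∀ β : ℝ, β₀ + 1 ≤ β → Integrable (fun z : Z =>
        ∑' n : Fin k → ℕ,
          Real.exp (-(β * s n)) * (Nat.card ((compIter h n) ⁻¹' {z}) : ℝ)) ε := by
      intro β hβ
      refine ⟨(hmeasf β hβ).aestronglyMeasurable, ?_⟩
      refine HasFiniteIntegral.of_bounded (C := 1 + T β) (ae_of_all _ fun z => ?_)
      have h1 := hsq β hβ z
      have h2 : (0:ℝ) ≤ ∑' n : Fin k → ℕ,
          Real.exp (-(β * s n)) * (Nat.card ((compIter h n) ⁻¹' {z}) : ℝ) :=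
        tsum_nonneg fun n => by positivity
      rw [Real.norm_eq_abs, abs_of_nonneg h2]
      rw [Real.norm_eq_abs] at h1
      have := abs_le.mp h1
      linarith [this.2]
    have hbnd : ∀ β : ℝ, β₀ + 1 ≤ β →
        ‖(∫ z, (∑' n : Fin k → ℕ,
          Real.exp (-(β * s n)) * (Nat.card ((compIter h n) ⁻¹' {z}) : ℝ)) ∂ε) - 1‖
          ≤ T β := by
      intro β hβ
      have h1 : (∫ z, (∑' n : Fin k → ℕ,
          Real.exp (-(β * s n)) * (Nat.card ((compIter h n) ⁻¹' {z}) : ℝ)) ∂ε) - 1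
          = ∫ z, ((∑' n : Fin k → ℕ,
            Real.exp (-(β * s n)) * (Nat.card ((compIter h n) ⁻¹' {z}) : ℝ)) - 1) ∂ε := by
        rw [integral_sub (hint β hβ) (integrable_const 1), integral_const]
        simp [hε.measure_univ]
      rw [h1]
      have h2 := norm_integral_le_of_norm_le_const (μ := ε)
        (f := fun z : Z => (∑' n : Fin k → ℕ,
          Real.exp (-(β * s n)) * (Nat.card ((compIter h n) ⁻¹' {z}) : ℝ)) - 1)
        (C := T β) (ae_of_all _ fun z => hsq β hβ z)
      simpa [hε.measure_univ] using h2
    have h0 : Tendsto (fun β : ℝ =>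
        (∫ z, (∑' n : Fin k → ℕ,
          Real.exp (-(β * s n)) * (Nat.card ((compIter h n) ⁻¹' {z}) : ℝ)) ∂ε) - 1)
        atTop (nhds 0) := by
      refine squeeze_zero_norm' ?_ hT0
      filter_upwards [eventually_ge_atTop (β₀ + 1)] with β hβ
      exact hbnd β hβ
    have h1 := h0.add_const 1
    simpa using h1
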